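/- Let Λ be an m×n real matrix, R a p×n real matrix, S a q×m real matrix and Q a k×n real matrix, with ker R ∩ ker(S Λ) = {0}. Fix ε > 0, η > 0, y ∈ ℝᵐ, and assume the set K = {f ∈ ℝⁿ : ‖R f‖ ≤ ε and ‖S (y − Λ f)‖ ≤ η} is nonempty. Then for every c, d ≥ 0 and t ∈ ℝ such that c RᵀR + d Λᵀ Sᵀ S Λ − QᵀQ is positive semidefinite and the block matrix [[c RᵀR + d Λᵀ Sᵀ S Λ, d Λᵀ Sᵀ S y], [d yᵀ Sᵀ S Λ, t]] is positive semidefinite, the squared Chebyshev radius of the image Q(K) is bounded as (inf_{z ∈ ℝᵏ} sup_{f ∈ K} ‖Q f − z‖)² ≤ c ε² + d η² − d ‖S y‖² + t. -/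

import Mathlib

open Matrix
open RealInnerProductSpace

/-- Euclidean norm on `Fin k → ℝ`. -/
noncomputable def eNorm {k : ℕ} (x : Fin k → ℝ) : ℝ := Real.sqrt (∑ i, x i ^ 2)

lemma eNorm_nonneg {k : ℕ} (x : Fin k → ℝ) : 0 ≤ eNorm x := Real.sqrt_nonneg _

lemma eNorm_sq {k : ℕ} (x : Fin k → ℝ) : eNorm x ^ 2 = x ⬝ᵥ x := by
  rw [eNorm, Real.sq_sqrt (by positivity)]
  simp [dotProduct, sq]

lemma exists_mulVec_eq {n : ℕ} (M : Matrix (Fin n) (Fin n) ℝ) (hM : M.IsHermitian)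
    (b : Fin n → ℝ) (hb : ∀ u, M *ᵥ u = 0 → u ⬝ᵥ b = 0) : ∃ x, M *ᵥ x = b := by
  set T := Matrix.toEuclideanLin M with hT
  have hsymm : T.IsSymmetric := Matrix.isHermitian_iff_isSymmetric.mp hM
  have happly : ∀ v : EuclideanSpace ℝ (Fin n), T v = (WithLp.equiv 2 (Fin n → ℝ)).symm (M *ᵥ (WithLp.equiv 2 (Fin n → ℝ)) v) :=
    fun v => rfl
  have hrange_le : LinearMap.range T ≤ (LinearMap.ker T)ᗮ := by
    rintro x ⟨w, rfl⟩
    intro u hu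
    have hTu : T u = 0 := hu
    rw [← hsymm u w, hTu, inner_zero_left]
  have hfin : Module.finrank ℝ (LinearMap.ker T)ᗮ ≤ Module.finrank ℝ (LinearMap.range T) := by
    have h1 := Submodule.finrank_add_finrank_orthogonal (LinearMap.ker T)
    have h2 := LinearMap.finrank_range_add_finrank_ker T
    omega
  have heq : LinearMap.range T = (LinearMap.ker T)ᗮ := Submodule.eq_of_le_of_finrank_le hrange_le hfin
  have hbmem : (WithLp.equiv 2 (Fin n → ℝ)).symm b ∈ (LinearMap.ker T)ᗮ := by
    intro u hu
    have h0 : M *ᵥ (WithLp.equiv 2 (Fin n → ℝ)) u = 0 := by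
      have : T u = 0 := hu
      have := congrArg (WithLp.equiv 2 (Fin n → ℝ)) this
      simpa [happly] using this
    have := hb _ h0
    simpa [real_inner_comm, PiLp.inner_apply, dotProduct, mul_comm] using this
  rw [← heq] at hbmem
  obtain ⟨x, hx⟩ := hbmem
  exact ⟨(WithLp.equiv 2 (Fin n → ℝ)) x, congrArg (WithLp.equiv 2 (Fin n → ℝ)) hx⟩

theorem chebyshev_radius_sq_le_SDP_value {m n p q k : ℕ}
    (Λ : Matrix (Fin m) (Fin n) ℝ) (R : Matrix (Fin p) (Fin n) ℝ)
    (S : Matrix (Fin q) (Fin m) ℝ) (Q : Matrix (Fin k) (Fin n) ℝ)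
    (hker : ∀ f : Fin n → ℝ, R *ᵥ f = 0 → (S * Λ) *ᵥ f = 0 → f = 0)
    (ε η : ℝ) (hε : 0 < ε) (hη : 0 < η) (y : Fin m → ℝ)
    (K : Set (Fin n → ℝ))
    (hK : K = {f : Fin n → ℝ | eNorm (R *ᵥ f) ≤ ε ∧ eNorm (S *ᵥ (y - Λ *ᵥ f)) ≤ η})
    (hKne : K.Nonempty) :
    ∀ c d t : ℝ, 0 ≤ c → 0 ≤ d →
      (c • (Rᵀ * R) + d • (Λᵀ * Sᵀ * S * Λ) - Qᵀ * Q).PosSemidef →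
      (Matrix.fromBlocks (c • (Rᵀ * R) + d • (Λᵀ * Sᵀ * S * Λ))
          (Matrix.replicateCol Unit (d • ((Λᵀ * Sᵀ * S) *ᵥ y)))
          (Matrix.replicateRow Unit (d • ((Λᵀ * Sᵀ * S) *ᵥ y)))
          (Matrix.of fun _ _ => t)).PosSemidef →
      (⨅ z : Fin k → ℝ, ⨆ f : K, eNorm (Q *ᵥ (f : Fin n → ℝ) - z)) ^ 2 ≤
        c * ε ^ 2 + d * η ^ 2 - d * eNorm (S *ᵥ y) ^ 2 + t := by
  intro c d t hc hd hM1 hM2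
  have hKsub : Nonempty K := hKne.to_subtype
  set M : Matrix (Fin n) (Fin n) ℝ := c • (Rᵀ * R) + d • (Λᵀ * Sᵀ * S * Λ) with hMdef
  set b : Fin n → ℝ := d • ((Λᵀ * Sᵀ * S) *ᵥ y) with hbdef
  -- transpose-dot helper
  have dotT : ∀ {a b' : ℕ} (A : Matrix (Fin a) (Fin b') ℝ) (u : Fin b' → ℝ) (w : Fin a → ℝ),
      u ⬝ᵥ (Aᵀ *ᵥ w) = (A *ᵥ u) ⬝ᵥ w := by
    intro a b' A u w
    rw [Matrix.dotProduct_mulVec, Matrix.vecMul_transpose]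
  -- quadratic form of M
  have qM : ∀ u v : Fin n → ℝ, u ⬝ᵥ (M *ᵥ v) =
      c * ((R *ᵥ u) ⬝ᵥ (R *ᵥ v)) + d * ((S *ᵥ (Λ *ᵥ u)) ⬝ᵥ (S *ᵥ (Λ *ᵥ v))) := by
    intro u v
    have h2 : Λᵀ * Sᵀ * S * Λ = (S * Λ)ᵀ * (S * Λ) := by
      rw [Matrix.transpose_mul]; simp [Matrix.mul_assoc]
    rw [hMdef, Matrix.add_mulVec, dotProduct_add, Matrix.smul_mulVec,
      Matrix.smul_mulVec, dotProduct_smul, dotProduct_smul, h2,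
      ← Matrix.mulVec_mulVec, dotT, ← Matrix.mulVec_mulVec, dotT, ← Matrix.mulVec_mulVec,
      ← Matrix.mulVec_mulVec]
    simp
  -- linear part
  have qb : ∀ u : Fin n → ℝ, b ⬝ᵥ u = d * ((S *ᵥ y) ⬝ᵥ (S *ᵥ (Λ *ᵥ u))) := by
    intro u
    have hB : Λᵀ * Sᵀ * S = (Sᵀ * S * Λ)ᵀ := by
      simp [Matrix.transpose_mul, Matrix.mul_assoc]
    rw [hbdef, smul_dotProduct]
    congr 1
    rw [hB, dotProduct_comm, dotT, ← Matrix.mulVec_mulVec, ← Matrix.mulVec_mulVec,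
      dotProduct_comm, dotT]
  -- hermitian
  have hMh : M.IsHermitian := by
    have h2 : Λᵀ * Sᵀ * S * Λ = (S * Λ)ᵀ * (S * Λ) := by
      rw [Matrix.transpose_mul]; simp [Matrix.mul_assoc]
    have hRR : (Rᵀ * R).IsHermitian := by
      have := Matrix.isHermitian_conjTranspose_mul_self R
      rwa [Matrix.conjTranspose_eq_transpose_of_trivial] at this
    have hSL : ((S * Λ)ᵀ * (S * Λ)).IsHermitian := by
      have := Matrix.isHermitian_conjTranspose_mul_self (S * Λ)
      rwa [Matrix.conjTranspose_eq_transpose_of_trivial] at this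
    show Mᴴ = M
    rw [hMdef, h2]
    simp [Matrix.conjTranspose_add, Matrix.conjTranspose_smul, hRR.eq, hSL.eq]
  -- M-symmetry of the dot product
  have symmM : ∀ u v : Fin n → ℝ, u ⬝ᵥ (M *ᵥ v) = (M *ᵥ u) ⬝ᵥ v := by
    intro u v
    have hMt : Mᵀ = M := by
      have := hMh
      rwa [Matrix.IsHermitian, Matrix.conjTranspose_eq_transpose_of_trivial] at this
    rw [Matrix.dotProduct_mulVec]
    conv_lhs => rw [← hMt]
    rw [Matrix.vecMul_transpose]
  -- block quadratic form evaluation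
  have blockEval : ∀ (x : Fin n → ℝ) (s : ℝ),
      0 ≤ x ⬝ᵥ (M *ᵥ x) + 2 * s * (b ⬝ᵥ x) + t * s ^ 2 := by
    intro x s
    have h := hM2.dotProduct_mulVec_nonneg (Sum.elim x fun _ => s)
    rw [Matrix.fromBlocks_mulVec] at h
    simp only [Sum.elim_comp_inl, Sum.elim_comp_inr] at h
    have hstar : star (Sum.elim x fun _ : Unit => s) = Sum.elim x fun _ : Unit => s := by
      simp [star_trivial]
    rw [hstar, sumElim_dotProduct_sumElim] at h
    have hcol : (Matrix.replicateCol Unit b) *ᵥ (fun _ : Unit => s) = s • b := by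
      ext i; simp [Matrix.mulVec, dotProduct, mul_comm]
    have hrow : (Matrix.replicateRow Unit b) *ᵥ x = fun _ : Unit => b ⬝ᵥ x := by
      ext i; simp [Matrix.mulVec, dotProduct]
    have hof : (Matrix.of fun _ _ : Unit => t) *ᵥ (fun _ : Unit => s) = fun _ : Unit => t * s := by
      ext i; simp [Matrix.mulVec, dotProduct]
    rw [hcol, hrow, hof, dotProduct_add, dotProduct_smul] at h
    have hunit : ((fun _ : Unit => s) ⬝ᵥ ((fun _ : Unit => b ⬝ᵥ x) + fun _ : Unit => t * s)) =
        s * (b ⬝ᵥ x) + s * (t * s) := by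
      simp [dotProduct, mul_add]
    rw [hunit] at h
    have hcomm : x ⬝ᵥ b = b ⬝ᵥ x := dotProduct_comm _ _
    simp only [smul_eq_mul] at h
    rw [hcomm] at h
    ring_nf at h ⊢
    linarith
  -- b is orthogonal to the kernel of M
  have hborth : ∀ u, M *ᵥ u = 0 → u ⬝ᵥ b = 0 := by
    intro u hu
    by_contra hne
    have hbu : b ⬝ᵥ u ≠ 0 := fun h => hne (by rwa [dotProduct_comm])
    set a : ℝ := (t + 1) / (2 * (b ⬝ᵥ u)) with ha
    have h := blockEval (a • u) (-1)
    rw [Matrix.mulVec_smul, hu, smul_zero, dotProduct_zero, dotProduct_smul] at h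
    have key : 2 * a * (b ⬝ᵥ u) = t + 1 := by
      rw [ha]; field_simp
    have : (0:ℝ) ≤ 0 + 2 * (-1) * (a * (b ⬝ᵥ u)) + t * (-1) ^ 2 := h
    nlinarith [this, key]
  obtain ⟨xh, hxh⟩ := exists_mulVec_eq M hMh b hborth
  -- b ⬝ xh ≤ t
  have hbxt : b ⬝ᵥ xh ≤ t := by
    have h := blockEval xh (-1)
    have h1 : xh ⬝ᵥ (M *ᵥ xh) = xh ⬝ᵥ b := by rw [hxh]
    have h2 : xh ⬝ᵥ b = b ⬝ᵥ xh := dotProduct_comm _ _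
    nlinarith [h]
  set A : ℝ := c * ε ^ 2 + d * η ^ 2 - d * eNorm (S *ᵥ y) ^ 2 + t with hA
  -- main pointwise bound
  have hbound : ∀ f ∈ K, (Q *ᵥ f - Q *ᵥ xh) ⬝ᵥ (Q *ᵥ f - Q *ᵥ xh) ≤ A := by
    intro f hf
    rw [hK] at hf
    obtain ⟨hf1, hf2⟩ := hf
    have hRf : (R *ᵥ f) ⬝ᵥ (R *ᵥ f) ≤ ε ^ 2 := by
      rw [← eNorm_sq]
      exact pow_le_pow_left₀ (eNorm_nonneg _) hf1 2
    have hSf : (S *ᵥ (y - Λ *ᵥ f)) ⬝ᵥ (S *ᵥ (y - Λ *ᵥ f)) ≤ η ^ 2 := by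
      rw [← eNorm_sq]
      exact pow_le_pow_left₀ (eNorm_nonneg _) hf2 2
    have hexp : (S *ᵥ (y - Λ *ᵥ f)) ⬝ᵥ (S *ᵥ (y - Λ *ᵥ f)) =
        (S *ᵥ y) ⬝ᵥ (S *ᵥ y) - 2 * ((S *ᵥ y) ⬝ᵥ (S *ᵥ (Λ *ᵥ f)))
          + (S *ᵥ (Λ *ᵥ f)) ⬝ᵥ (S *ᵥ (Λ *ᵥ f)) := by
      rw [Matrix.mulVec_sub, dotProduct_sub, sub_dotProduct,
        sub_dotProduct]
      have : (S *ᵥ (Λ *ᵥ f)) ⬝ᵥ (S *ᵥ y) = (S *ᵥ y) ⬝ᵥ (S *ᵥ (Λ *ᵥ f)) :=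
        dotProduct_comm _ _
      rw [this]; ring
    -- f M f - 2 b f ≤ c ε² + d η² - d ‖Sy‖²
    have hquad : f ⬝ᵥ (M *ᵥ f) - 2 * (b ⬝ᵥ f) ≤
        c * ε ^ 2 + d * η ^ 2 - d * ((S *ᵥ y) ⬝ᵥ (S *ᵥ y)) := by
      rw [qM, qb]
      have h1 : c * ((R *ᵥ f) ⬝ᵥ (R *ᵥ f)) ≤ c * ε ^ 2 :=
        mul_le_mul_of_nonneg_left hRf hc
      have h2 : d * ((S *ᵥ (y - Λ *ᵥ f)) ⬝ᵥ (S *ᵥ (y - Λ *ᵥ f))) ≤ d * η ^ 2 :=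
        mul_le_mul_of_nonneg_left hSf hd
      rw [hexp] at h2
      ring_nf at h1 h2 ⊢
      linarith
    -- Q part
    have hQ : (Q *ᵥ f - Q *ᵥ xh) ⬝ᵥ (Q *ᵥ f - Q *ᵥ xh) ≤ (f - xh) ⬝ᵥ (M *ᵥ (f - xh)) := by
      have h := hM1.dotProduct_mulVec_nonneg (f - xh)
      have hstar : star (f - xh) = f - xh := by simp [star_trivial]
      rw [hstar, Matrix.sub_mulVec, dotProduct_sub] at h
      have hQQ : (f - xh) ⬝ᵥ ((Qᵀ * Q) *ᵥ (f - xh)) =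
          (Q *ᵥ (f - xh)) ⬝ᵥ (Q *ᵥ (f - xh)) := by
        rw [← Matrix.mulVec_mulVec, dotT]
      rw [hQQ] at h
      rw [← Matrix.mulVec_sub]
      linarith
    have hMexp : (f - xh) ⬝ᵥ (M *ᵥ (f - xh)) =
        f ⬝ᵥ (M *ᵥ f) - 2 * (b ⬝ᵥ f) + b ⬝ᵥ xh := by
      rw [Matrix.mulVec_sub, dotProduct_sub, sub_dotProduct,
        sub_dotProduct, hxh]
      have h1 : xh ⬝ᵥ (M *ᵥ f) = b ⬝ᵥ f := by rw [symmM, hxh]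
      have h2 : f ⬝ᵥ b = b ⬝ᵥ f := dotProduct_comm _ _
      have h3 : xh ⬝ᵥ b = b ⬝ᵥ xh := dotProduct_comm _ _
      rw [h1, h2, h3]; ring
    have hSy : eNorm (S *ᵥ y) ^ 2 = (S *ᵥ y) ⬝ᵥ (S *ᵥ y) := eNorm_sq _
    rw [hA, hSy]
    calc (Q *ᵥ f - Q *ᵥ xh) ⬝ᵥ (Q *ᵥ f - Q *ᵥ xh) ≤ (f - xh) ⬝ᵥ (M *ᵥ (f - xh)) := hQ
      _ = f ⬝ᵥ (M *ᵥ f) - 2 * (b ⬝ᵥ f) + b ⬝ᵥ xh := hMexp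
      _ ≤ c * ε ^ 2 + d * η ^ 2 - d * ((S *ᵥ y) ⬝ᵥ (S *ᵥ y)) + t := by linarith
  -- A is nonnegative
  obtain ⟨f₀, hf₀⟩ := hKne
  have hA0 : 0 ≤ A := by
    have h := hbound f₀ hf₀
    have h0 : 0 ≤ (Q *ᵥ f₀ - Q *ᵥ xh) ⬝ᵥ (Q *ᵥ f₀ - Q *ᵥ xh) := by
      rw [← eNorm_sq]; positivity
    linarith
  -- eNorm bound
  have hnormbound : ∀ f : K, eNorm (Q *ᵥ (f : Fin n → ℝ) - Q *ᵥ xh) ≤ Real.sqrt A := by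
    intro f
    have h := hbound f f.2
    rw [← eNorm_sq] at h
    calc eNorm (Q *ᵥ (f : Fin n → ℝ) - Q *ᵥ xh)
        = Real.sqrt (eNorm (Q *ᵥ (f : Fin n → ℝ) - Q *ᵥ xh) ^ 2) := by
          rw [Real.sqrt_sq (eNorm_nonneg _)]
      _ ≤ Real.sqrt A := Real.sqrt_le_sqrt h
  have hsupnn : ∀ z : Fin k → ℝ, 0 ≤ ⨆ f : K, eNorm (Q *ᵥ (f : Fin n → ℝ) - z) :=
    fun z => Real.iSup_nonneg fun f => eNorm_nonneg _
  have hinfle : (⨅ z : Fin k → ℝ, ⨆ f : K, eNorm (Q *ᵥ (f : Fin n → ℝ) - z)) ≤ Real.sqrt A := by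
    have hbdd : BddBelow (Set.range fun z : Fin k → ℝ =>
        ⨆ f : K, eNorm (Q *ᵥ (f : Fin n → ℝ) - z)) := by
      refine ⟨0, ?_⟩
      rintro v ⟨z, rfl⟩
      exact hsupnn z
    refine ciInf_le_of_le hbdd (Q *ᵥ xh) ?_
    exact Real.iSup_le (fun f => hnormbound f) (Real.sqrt_nonneg _)
  have hinf0 : 0 ≤ ⨅ z : Fin k → ℝ, ⨆ f : K, eNorm (Q *ᵥ (f : Fin n → ℝ) - z) :=
    le_ciInf hsupnn
  calc (⨅ z : Fin k → ℝ, ⨆ f : K, eNorm (Q *ᵥ (f : Fin n → ℝ) - z)) ^ 2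
      ≤ Real.sqrt A ^ 2 := pow_le_pow_left₀ hinf0 hinfle 2
    _ = A := Real.sq_sqrt hA0
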